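/- Let γ ∈ SF⁺ with q̄ = q̄(γ). There exists a constant C > 0 depending only on κ and q̄ such that for all (t,x) ∈ [0,q̄] × ℝ one has −(3/2)·(κ−x)²/(1−q̄) − C ≤ Φ_γ(t,x) ≤ 0, and the same constant C works simultaneously for every γ ∈ SF⁺ with q̄(γ) = q̄. (Part of Proposition 4.1, Eq. (4.7).) -/

import Mathlib

open MeasureTheory ProbabilityTheory

/-- The standard Gaussian measure on `ℝ`. -/
noncomputable def stdGauss : Measure ℝ := gaussianReal 0 1

/-- The Gaussian tail function `𝒩(v) = P(Z ≥ v)`. -/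
noncomputable def gaussTail (v : ℝ) : ℝ := (stdGauss (Set.Ici v)).toReal

/-- A functional order parameter in `SF⁺`: a non-decreasing step function
`γ = Σ_{i=0}^n m_i · 1_{[q_i, q_{i+1})}` with `0 = q_0 < q_1 < ⋯ < q_{n+1} = 1` and
`0 = m_0 ≤ m_1 ≤ ⋯ ≤ m_n = 1`. -/
structure StepFn where
  n : ℕ
  q : ℕ → ℝ
  m : ℕ → ℝ
  q_zero : q 0 = 0
  q_last : q (n + 1) = 1
  q_lt : ∀ i ≤ n, q i < q (i + 1)
  m_zero : m 0 = 0
  m_last : m n = 1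
  m_mono : ∀ i < n, m i ≤ m (i + 1)

namespace StepFn

/-- The right end `q̄(γ) = q_n` of the support of `γ`. -/
noncomputable def qbar (γ : StepFn) : ℝ := γ.q γ.n

open Classical in
/-- `γ` as a function: `γ(s) = m_i` for `s ∈ [q_i, q_{i+1})`, and `0` outside `[0,1)`. -/
noncomputable def toFun (γ : StepFn) (s : ℝ) : ℝ :=
  if s ∈ Set.Ico (0 : ℝ) 1 then γ.m (Nat.findGreatest (fun i => γ.q i ≤ s) γ.n) else 0

end StepFn

/-- One Cole–Hopf step: given a boundary value `g` at the right end of an interval,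
spread `s` and parameter `m`, produce the value at distance `s` from the right end. -/
noncomputable def coleHopf (m s : ℝ) (g : ℝ → ℝ) (x : ℝ) : ℝ :=
  if 0 < m then (1 / m) * Real.log (∫ z, Real.exp (m * g (x + Real.sqrt s * z)) ∂stdGauss)
  else ∫ z, g (x + Real.sqrt s * z) ∂stdGauss

namespace StepFn

/-- `PhiAux γ κ j` is the solution `Φ_γ` on the interval `[q_{n-j}, q_{n-j+1})`,
built recursively downward from the terminal condition on `[q_n, 1)`. -/
noncomputable def PhiAux (γ : StepFn) (κ : ℝ) : ℕ → ℝ → ℝ → ℝ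
  | 0 => fun t x => Real.log (gaussTail ((κ - x) / Real.sqrt (1 - t)))
  | j + 1 => fun t x =>
      coleHopf (γ.m (γ.n - (j + 1))) (γ.q (γ.n - j) - t) (γ.PhiAux κ j (γ.q (γ.n - j))) x

open Classical in
/-- The solution `Φ_γ(t,x)` of the Parisi PDE for the step function `γ`:
for `t ∈ [q_i, q_{i+1})` it is given by `PhiAux γ κ (n - i)`. -/
noncomputable def Phi (γ : StepFn) (κ : ℝ) (t x : ℝ) : ℝ :=
  γ.PhiAux κ (γ.n - Nat.findGreatest (fun i => γ.q i ≤ t) γ.n) t x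

end StepFn

open scoped ENNReal NNReal Real

instance : IsProbabilityMeasure stdGauss := by
  unfold stdGauss; infer_instance

namespace Aux

open Real

lemma pdf_eq (z : ℝ) :
    gaussianPDFReal 0 1 z = (Real.sqrt (2 * π))⁻¹ * Real.exp (-(z ^ 2) / 2) := by
  simp [gaussianPDFReal]

lemma pdf_meas : Measurable (fun z => (gaussianPDFReal 0 1 z).toNNReal) :=
  (measurable_gaussianPDFReal 0 1).real_toNNReal

lemma stdGauss_eq :
    stdGauss = volume.withDensity (fun z => ((gaussianPDFReal 0 1 z).toNNReal : ℝ≥0∞)) := by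
  rw [stdGauss, gaussianReal_of_var_ne_zero 0 one_ne_zero]
  rfl

lemma stdGauss_integral (g : ℝ → ℝ) :
    ∫ z, g z ∂stdGauss = ∫ z, gaussianPDFReal 0 1 z * g z := by
  rw [stdGauss_eq, integral_withDensity_eq_integral_smul₀ pdf_meas.aemeasurable]
  congr 1 with z
  simp [NNReal.smul_def, Real.coe_toNNReal _ (gaussianPDFReal_nonneg 0 1 z)]

lemma stdGauss_integrable_iff (g : ℝ → ℝ) :
    Integrable g stdGauss ↔ Integrable (fun z => gaussianPDFReal 0 1 z * g z) volume := by
  rw [stdGauss_eq, integrable_withDensity_iff_integrable_smul₀ pdf_meas.aemeasurable]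
  constructor <;> intro h <;> refine h.congr (Filter.Eventually.of_forall fun z => ?_) <;>
    simp [NNReal.smul_def, Real.coe_toNNReal _ (gaussianPDFReal_nonneg 0 1 z)]

lemma exp_integrable (t : ℝ) : Integrable (fun z => Real.exp (t * z)) stdGauss := by
  rw [stdGauss_integrable_iff]
  have hkey : ∀ z : ℝ, gaussianPDFReal 0 1 z * Real.exp (t * z)
      = (Real.sqrt (2 * π))⁻¹ * Real.exp (t ^ 2 / 2) * Real.exp (-(1/2) * (z - t) ^ 2) := by
    intro z
    rw [pdf_eq, mul_assoc, mul_assoc, ← Real.exp_add, ← Real.exp_add]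
    ring_nf
  have : Integrable (fun z : ℝ =>
      (Real.sqrt (2 * π))⁻¹ * Real.exp (t ^ 2 / 2) * Real.exp (-(1/2) * (z - t) ^ 2)) volume := by
    exact ((integrable_exp_neg_mul_sq (by norm_num : (0:ℝ) < 1/2)).comp_sub_right t).const_mul _
  exact this.congr (Filter.Eventually.of_forall fun z => (hkey z).symm)

lemma exp_integral (t : ℝ) : ∫ z, Real.exp (t * z) ∂stdGauss = Real.exp (t ^ 2 / 2) := by
  rw [stdGauss_integral]
  have hkey : ∀ z : ℝ, gaussianPDFReal 0 1 z * Real.exp (t * z)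
      = (Real.sqrt (2 * π))⁻¹ * Real.exp (t ^ 2 / 2) * Real.exp (-(1/2) * (z - t) ^ 2) := by
    intro z
    rw [pdf_eq, mul_assoc, mul_assoc, ← Real.exp_add, ← Real.exp_add]
    ring_nf
  simp_rw [hkey]
  rw [integral_const_mul, integral_sub_right_eq_self (fun z => Real.exp (-(1/2) * z ^ 2)) t,
    integral_gaussian]
  have h2π : (0:ℝ) < 2 * π := by positivity
  rw [show π / (1/2) = 2 * π by ring]
  field_simp

lemma sq_le_exp (z : ℝ) : z ^ 2 ≤ Real.exp (2 * z) + Real.exp (-2 * z) := by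
  have h1 : |z| ≤ Real.exp |z| := by
    have := Real.add_one_le_exp |z|
    linarith
  have h2 : z ^ 2 ≤ Real.exp |z| ^ 2 := by
    rw [← sq_abs z]
    exact pow_le_pow_left₀ (abs_nonneg z) h1 2
  have h3 : Real.exp |z| ^ 2 = Real.exp (2 * |z|) := by
    rw [← Real.exp_nat_mul]; norm_num [mul_comm]
  rcases abs_cases z with ⟨h, _⟩ | ⟨h, _⟩
  · have := Real.exp_pos (-2 * z)
    rw [h] at h2 h3
    nlinarith
  · have := Real.exp_pos (2 * z)
    rw [h] at h2 h3
    have : Real.exp (2 * -z) = Real.exp (-2 * z) := by ring_nf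
    nlinarith [Real.exp_pos (2 * z), h2, h3]

lemma id_le_exp (z : ℝ) : |z| ≤ Real.exp (2 * z) + Real.exp (-2 * z) := by
  have h1 : |z| ≤ Real.exp |z| := by
    have := Real.add_one_le_exp |z|
    linarith
  have h3 : Real.exp |z| ≤ Real.exp (2 * |z|) := Real.exp_le_exp.2 (by nlinarith [abs_nonneg z])
  rcases abs_cases z with ⟨h, _⟩ | ⟨h, _⟩
  · have := Real.exp_pos (-2 * z)
    rw [h] at h1 h3
    nlinarith
  · have := Real.exp_pos (2 * z)
    rw [h] at h1 h3
    have h4 : Real.exp (2 * -z) = Real.exp (-2 * z) := by ring_nf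
    nlinarith

lemma expsum_integrable : Integrable (fun z => Real.exp (2 * z) + Real.exp (-2 * z)) stdGauss :=
  (exp_integrable 2).add (exp_integrable (-2))

lemma sq_integrable : Integrable (fun z : ℝ => z ^ 2) stdGauss := by
  refine expsum_integrable.mono' ((measurable_id.pow_const 2).aestronglyMeasurable) ?_
  refine Filter.Eventually.of_forall fun z => ?_
  rw [Real.norm_eq_abs, abs_of_nonneg (sq_nonneg z)]
  exact sq_le_exp z

lemma id_integrable : Integrable (fun z : ℝ => z) stdGauss := by
  refine expsum_integrable.mono' measurable_id.aestronglyMeasurable ?_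
  exact Filter.Eventually.of_forall fun z => id_le_exp z

noncomputable def Mconst : ℝ := 2 * Real.exp 2

lemma Mconst_pos : 0 < Mconst := by unfold Mconst; positivity

lemma sq_integral_le : ∫ z, z ^ 2 ∂stdGauss ≤ Mconst := by
  have h := integral_mono sq_integrable expsum_integrable (fun z => sq_le_exp z)
  rw [integral_add (exp_integrable 2) (exp_integrable (-2)), exp_integral, exp_integral] at h
  unfold Mconst
  have h1 : ((2:ℝ) ^ 2 / 2) = 2 := by norm_num
  have h2 : (((-2):ℝ) ^ 2 / 2) = 2 := by norm_num
  rw [h1, h2] at h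
  linarith

lemma id_integral : ∫ z, (z : ℝ) ∂stdGauss = 0 := by
  rw [stdGauss_integral]
  have hodd : ∀ z : ℝ, gaussianPDFReal 0 1 (-z) * (-z) = -(gaussianPDFReal 0 1 z * z) := by
    intro z
    rw [pdf_eq, pdf_eq]
    ring_nf
  have h := MeasureTheory.integral_neg_eq_self (fun z => gaussianPDFReal 0 1 z * z) volume
  simp_rw [hodd] at h
  rw [integral_neg] at h
  linarith

lemma quad_integrable (c d : ℝ) : Integrable (fun z => (c - d * z) ^ 2) stdGauss := by
  have : (fun z : ℝ => (c - d * z) ^ 2)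
      = fun z => (c ^ 2) + ((-(2 * c * d)) * z + d ^ 2 * z ^ 2) := by
    funext z; ring
  rw [this]
  exact (integrable_const _).add ((id_integrable.const_mul _).add (sq_integrable.const_mul _))

lemma quad_integral_le (c d : ℝ) :
    ∫ z, (c - d * z) ^ 2 ∂stdGauss ≤ c ^ 2 + d ^ 2 * Mconst := by
  have heq : (fun z : ℝ => (c - d * z) ^ 2)
      = fun z => (c ^ 2) + ((-(2 * c * d)) * z + d ^ 2 * z ^ 2) := by
    funext z; ring
  have h3 : Integrable (fun z : ℝ => -(2 * c * d) * z) stdGauss := id_integrable.const_mul _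
  have h4 : Integrable (fun z : ℝ => d ^ 2 * z ^ 2) stdGauss := sq_integrable.const_mul _
  have h2 : Integrable (fun z : ℝ => -(2 * c * d) * z + d ^ 2 * z ^ 2) stdGauss := h3.add h4
  rw [heq, integral_add (integrable_const _) h2, integral_add h3 h4,
    integral_const_mul, integral_const_mul, id_integral, integral_const]
  simp only [probReal_univ, measure_univ, ENNReal.toReal_one, smul_eq_mul, one_mul, mul_zero, add_zero]
  have := sq_integral_le
  nlinarith [sq_nonneg d]


-- ### gaussTail bounds

lemma gaussTail_nonneg (v : ℝ) : 0 ≤ gaussTail v := ENNReal.toReal_nonneg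

lemma gaussTail_le_one (v : ℝ) : gaussTail v ≤ 1 := by
  have h := prob_le_one (μ := stdGauss) (s := Set.Ici v)
  unfold gaussTail
  exact ENNReal.toReal_le_of_le_ofReal zero_le_one (by simpa using h)

lemma gaussTail_eq (v : ℝ) : gaussTail v = ∫ x in Set.Ici v, gaussianPDFReal 0 1 x := by
  unfold gaussTail stdGauss
  rw [gaussianReal_apply_eq_integral 0 one_ne_zero]
  rw [ENNReal.toReal_ofReal]
  exact setIntegral_nonneg measurableSet_Ici fun x _ => gaussianPDFReal_nonneg 0 1 x

lemma gaussTail_ge (v : ℝ) :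
    (Real.sqrt (2 * π))⁻¹ * Real.exp (-(|v| + 1) ^ 2 / 2) ≤ gaussTail v := by
  rw [gaussTail_eq]
  have hsub : ∫ x in Set.Icc v (v+1), gaussianPDFReal 0 1 x
      ≤ ∫ x in Set.Ici v, gaussianPDFReal 0 1 x := by
    apply setIntegral_mono_set (integrable_gaussianPDFReal 0 1).integrableOn
    · exact Filter.Eventually.of_forall fun x => gaussianPDFReal_nonneg 0 1 x
    · exact Filter.Eventually.of_forall fun x hx => hx.1
  refine le_trans ?_ hsub
  have hconst : ∫ x in Set.Icc v (v+1),
      ((Real.sqrt (2 * π))⁻¹ * Real.exp (-(|v| + 1) ^ 2 / 2)) ∂volume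
      = (Real.sqrt (2 * π))⁻¹ * Real.exp (-(|v| + 1) ^ 2 / 2) := by
    rw [setIntegral_const]
    rw [Real.volume_real_Icc]
    norm_num
  rw [← hconst]
  apply setIntegral_mono_on
  · exact integrableOn_const (by rw [Real.volume_Icc]; exact ENNReal.ofReal_ne_top)
  · exact (integrable_gaussianPDFReal 0 1).integrableOn
  · exact measurableSet_Icc
  · intro x hx
    rw [pdf_eq]
    apply mul_le_mul_of_nonneg_left _ (by positivity)
    apply Real.exp_le_exp.2
    have hxabs : |x| ≤ |v| + 1 := by
      rcases hx with ⟨h1, h2⟩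
      rw [abs_le]
      constructor
      · have := neg_abs_le v; linarith
      · have := le_abs_self v; linarith
    have : x ^ 2 ≤ (|v| + 1) ^ 2 := by
      rw [← sq_abs x]
      exact pow_le_pow_left₀ (abs_nonneg x) hxabs 2
    linarith

lemma gaussTail_pos (v : ℝ) : 0 < gaussTail v :=
  lt_of_lt_of_le (by positivity) (gaussTail_ge v)

noncomputable def cconst : ℝ := 1 + Real.log (Real.sqrt (2 * π))

lemma cconst_pos : 0 < cconst := by
  unfold cconst
  have : 0 ≤ Real.log (Real.sqrt (2 * π)) := by
    apply Real.log_nonneg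
    rw [show (1:ℝ) = Real.sqrt 1 by simp]
    apply Real.sqrt_le_sqrt
    nlinarith [Real.pi_gt_three]
  linarith

lemma log_gaussTail_nonpos (v : ℝ) : Real.log (gaussTail v) ≤ 0 :=
  Real.log_nonpos (gaussTail_nonneg v) (gaussTail_le_one v)

lemma log_gaussTail_ge (v : ℝ) : -(v ^ 2 + cconst) ≤ Real.log (gaussTail v) := by
  have h1 := Real.log_le_log (by positivity :
      (0:ℝ) < (Real.sqrt (2 * π))⁻¹ * Real.exp (-(|v| + 1) ^ 2 / 2)) (gaussTail_ge v)
  rw [Real.log_mul (by positivity) (Real.exp_ne_zero _), Real.log_exp, Real.log_inv] at h1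
  have h2 : (|v| + 1) ^ 2 / 2 ≤ v ^ 2 + 1 := by
    nlinarith [sq_abs v, sq_nonneg (|v| - 1), abs_nonneg v]
  unfold cconst
  linarith

-- ### coleHopf lemmas

lemma coleHopf_nonpos {m s : ℝ} {g : ℝ → ℝ} (hg : ∀ y, g y ≤ 0) (x : ℝ) :
    coleHopf m s g x ≤ 0 := by
  unfold coleHopf
  split_ifs with hm
  · have hint : ∫ z, Real.exp (m * g (x + Real.sqrt s * z)) ∂stdGauss ≤ 1 := by
      by_cases hI : Integrable (fun z => Real.exp (m * g (x + Real.sqrt s * z))) stdGauss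
      · calc ∫ z, Real.exp (m * g (x + Real.sqrt s * z)) ∂stdGauss
            ≤ ∫ _z, (1:ℝ) ∂stdGauss := by
              apply integral_mono hI (integrable_const 1)
              intro z
              exact Real.exp_le_one_iff.2 (mul_nonpos_of_nonneg_of_nonpos hm.le (hg _))
          _ = 1 := by simp
      · rw [integral_undef hI]; norm_num
    have hnn : (0:ℝ) ≤ ∫ z, Real.exp (m * g (x + Real.sqrt s * z)) ∂stdGauss :=
      integral_nonneg fun z => (Real.exp_pos _).le
    have hlog : Real.log (∫ z, Real.exp (m * g (x + Real.sqrt s * z)) ∂stdGauss) ≤ 0 :=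
      Real.log_nonpos hnn hint
    exact mul_nonpos_of_nonneg_of_nonpos (by positivity) hlog
  · exact integral_nonpos fun z => hg _

lemma coleHopf_measurable (m s : ℝ) {g : ℝ → ℝ} (hg : Measurable g) :
    Measurable (coleHopf m s g) := by
  unfold coleHopf
  have hinner : Measurable fun p : ℝ × ℝ => g (p.1 + Real.sqrt s * p.2) :=
    hg.comp (measurable_fst.add (measurable_snd.const_mul _))
  split_ifs with hm
  · have hj : Measurable fun p : ℝ × ℝ => Real.exp (m * g (p.1 + Real.sqrt s * p.2)) :=
      (hinner.const_mul m).exp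
    exact ((hj.stronglyMeasurable.integral_prod_right').measurable.log).const_mul _
  · exact (hinner.stronglyMeasurable.integral_prod_right').measurable

lemma coleHopf_lower (κ a B m s : ℝ) (ha : 0 ≤ a) (hB : 0 ≤ B) (hs : 0 ≤ s) (hm : 0 ≤ m)
    {g : ℝ → ℝ} (hgm : Measurable g) (hg0 : ∀ y, g y ≤ 0)
    (hgb : ∀ y, -(a * (κ - y) ^ 2 + B) ≤ g y) (x : ℝ) :
    -(a * (κ - x) ^ 2 + (a * s * Mconst + B)) ≤ coleHopf m s g x := by
  set f : ℝ → ℝ := fun z => g (x + Real.sqrt s * z) with hf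
  have hfm : Measurable f := hgm.comp (measurable_const.add (measurable_id.const_mul _))
  have hfb : ∀ z, -(a * ((κ - x) - Real.sqrt s * z) ^ 2 + B) ≤ f z := by
    intro z
    have := hgb (x + Real.sqrt s * z)
    have harg : κ - (x + Real.sqrt s * z) = (κ - x) - Real.sqrt s * z := by ring
    rw [harg] at this
    exact this
  have hf0 : ∀ z, f z ≤ 0 := fun z => hg0 _
  have hbInt : Integrable (fun z => a * ((κ - x) - Real.sqrt s * z) ^ 2 + B) stdGauss := by
    have h1 : Integrable (fun z => a * ((κ - x) - Real.sqrt s * z) ^ 2) stdGauss :=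
      (quad_integrable (κ - x) (Real.sqrt s)).const_mul a
    exact h1.add (integrable_const B)
  have hfInt : Integrable f stdGauss := by
    refine hbInt.mono' hfm.aestronglyMeasurable (Filter.Eventually.of_forall fun z => ?_)
    rw [Real.norm_eq_abs, abs_le]
    constructor
    · exact hfb z
    · have h1 : (0:ℝ) ≤ a * ((κ - x) - Real.sqrt s * z) ^ 2 + B := by positivity
      linarith [hf0 z]
  have hIbound : -(a * ((κ - x) ^ 2 + s * Mconst) + B) ≤ ∫ z, f z ∂stdGauss := by
    have h1 : ∫ z, -(a * ((κ - x) - Real.sqrt s * z) ^ 2 + B) ∂stdGauss ≤ ∫ z, f z ∂stdGauss :=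
      integral_mono hbInt.neg hfInt hfb
    have h2 : ∫ z, -(a * ((κ - x) - Real.sqrt s * z) ^ 2 + B) ∂stdGauss
        = -(a * (∫ z, ((κ - x) - Real.sqrt s * z) ^ 2 ∂stdGauss) + B) := by
      rw [integral_neg, integral_add ((quad_integrable (κ - x) (Real.sqrt s)).const_mul a)
        (integrable_const B), integral_const_mul, integral_const]
      simp [measure_univ]
    have h3 : ∫ z, ((κ - x) - Real.sqrt s * z) ^ 2 ∂stdGauss
        ≤ (κ - x) ^ 2 + s * Mconst := by
      have := quad_integral_le (κ - x) (Real.sqrt s)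
      rwa [Real.sq_sqrt hs] at this
    have h4 : -(a * ((κ - x) ^ 2 + s * Mconst) + B)
        ≤ -(a * (∫ z, ((κ - x) - Real.sqrt s * z) ^ 2 ∂stdGauss) + B) := by
      have := mul_le_mul_of_nonneg_left h3 ha
      linarith
    linarith
  have hgoal : -(a * (κ - x) ^ 2 + (a * s * Mconst + B)) = -(a * ((κ - x) ^ 2 + s * Mconst) + B) := by
    ring
  rw [hgoal]
  unfold coleHopf
  split_ifs with hmpos
  · -- Jensen
    have hmf : Integrable (fun z => m * f z) stdGauss := hfInt.const_mul m
    have hexpInt : Integrable (fun z => Real.exp (m * f z)) stdGauss := by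
      refine (integrable_const (1:ℝ)).mono' ((hfm.const_mul m).exp.aestronglyMeasurable) ?_
      refine Filter.Eventually.of_forall fun z => ?_
      rw [Real.norm_eq_abs, abs_of_pos (Real.exp_pos _)]
      exact Real.exp_le_one_iff.2 (mul_nonpos_of_nonneg_of_nonpos hm (hf0 z))
    have hjensen : Real.exp (∫ z, m * f z ∂stdGauss) ≤ ∫ z, Real.exp (m * f z) ∂stdGauss := by
      have := convexOn_exp.map_integral_le (Real.continuous_exp.continuousOn) isClosed_univ
        (Filter.Eventually.of_forall fun z => Set.mem_univ _) hmf
        (by exact hexpInt)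
      simpa using this
    have hpos : (0:ℝ) < ∫ z, Real.exp (m * f z) ∂stdGauss :=
      lt_of_lt_of_le (Real.exp_pos _) hjensen
    have hlog : ∫ z, m * f z ∂stdGauss ≤ Real.log (∫ z, Real.exp (m * f z) ∂stdGauss) := by
      have := Real.log_le_log (Real.exp_pos _) hjensen
      rwa [Real.log_exp] at this
    rw [integral_const_mul] at hlog
    have hstep : ∫ z, f z ∂stdGauss
        ≤ (1 / m) * Real.log (∫ z, Real.exp (m * f z) ∂stdGauss) := by
      have := mul_le_mul_of_nonneg_left hlog (le_of_lt (one_div_pos.2 hmpos))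
      rwa [← mul_assoc, one_div_mul_cancel (ne_of_gt hmpos), one_mul] at this
    calc -(a * ((κ - x) ^ 2 + s * Mconst) + B) ≤ ∫ z, f z ∂stdGauss := hIbound
      _ ≤ _ := hstep
  · exact hIbound

-- ### StepFn helper lemmas

lemma q_mono (γ : StepFn) : ∀ j, j ≤ γ.n + 1 → ∀ i, i ≤ j → γ.q i ≤ γ.q j := by
  intro j
  induction j with
  | zero => intro _ i hi; interval_cases i; exact le_refl _
  | succ k ih =>
    intro hk i hi
    rcases Nat.eq_or_lt_of_le hi with h | h
    · rw [h]
    · have h1 : γ.q i ≤ γ.q k := ih (by omega) i (by omega)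
      have h2 : γ.q k < γ.q (k + 1) := γ.q_lt k (by omega)
      linarith

lemma q_nonneg (γ : StepFn) {i : ℕ} (hi : i ≤ γ.n + 1) : 0 ≤ γ.q i := by
  have := q_mono γ i hi 0 (Nat.zero_le _)
  rw [γ.q_zero] at this
  linarith

lemma qbar_nonneg (γ : StepFn) : 0 ≤ γ.qbar := q_nonneg γ (Nat.le_succ _)

lemma qbar_lt_one (γ : StepFn) : γ.qbar < 1 := by
  have := γ.q_lt γ.n (le_refl _)
  rw [γ.q_last] at this
  exact this

lemma m_nonneg (γ : StepFn) : ∀ i, i ≤ γ.n → 0 ≤ γ.m i := by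
  intro i
  induction i with
  | zero => intro _; rw [γ.m_zero]
  | succ k ih =>
    intro hk
    have := γ.m_mono k (by omega)
    have := ih (by omega)
    linarith

-- ### PhiAux bounds

lemma phiAux_nonpos (γ : StepFn) (κ : ℝ) : ∀ j t x, γ.PhiAux κ j t x ≤ 0 := by
  intro j
  induction j with
  | zero => intro t x; exact log_gaussTail_nonpos _
  | succ j ih =>
    intro t x
    exact coleHopf_nonpos (fun y => ih _ y) x

lemma base_lower (κ qb t x : ℝ) (hq : qb < 1) (ht : t ≤ qb) :
    -((1 - qb)⁻¹ * (κ - x) ^ 2 + cconst)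
      ≤ Real.log (gaussTail ((κ - x) / Real.sqrt (1 - t))) := by
  have h1 : (0:ℝ) < 1 - qb := by linarith
  have h2 : (0:ℝ) < 1 - t := by linarith
  have hv := log_gaussTail_ge ((κ - x) / Real.sqrt (1 - t))
  have hsq : ((κ - x) / Real.sqrt (1 - t)) ^ 2 = (κ - x) ^ 2 / (1 - t) := by
    rw [div_pow, Real.sq_sqrt h2.le]
  have hle : (κ - x) ^ 2 / (1 - t) ≤ (1 - qb)⁻¹ * (κ - x) ^ 2 := by
    rw [← div_eq_inv_mul]
    exact div_le_div_of_nonneg_left (sq_nonneg _) h1 (by linarith)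
  rw [hsq] at hv
  linarith

lemma phiAux_bounds (γ : StepFn) (κ : ℝ) : ∀ j : ℕ,
    Measurable (γ.PhiAux κ j (γ.q (γ.n - j))) ∧
    ∀ x : ℝ, -((1 - γ.qbar)⁻¹ * (κ - x) ^ 2 +
        ((1 - γ.qbar)⁻¹ * (γ.qbar - γ.q (γ.n - j)) * Mconst + cconst))
      ≤ γ.PhiAux κ j (γ.q (γ.n - j)) x := by
  have hq1 : γ.qbar < 1 := qbar_lt_one γ
  have ha : (0:ℝ) ≤ (1 - γ.qbar)⁻¹ := by
    have : (0:ℝ) < 1 - γ.qbar := by linarith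
    positivity
  intro j
  induction j with
  | zero =>
    constructor
    · have hgt : Measurable gaussTail := by
        have : Antitone gaussTail := by
          intro v w hvw
          unfold gaussTail
          exact ENNReal.toReal_mono (measure_ne_top _ _)
            (measure_mono (Set.Ici_subset_Ici.2 hvw))
        exact this.measurable
      exact (hgt.comp ((measurable_const.sub measurable_id).div_const _)).log
    · intro x
      simp only [Nat.sub_zero]
      have hbase := base_lower κ γ.qbar (γ.q γ.n) x hq1 (le_of_eq rfl)
      have heq : γ.qbar - γ.q γ.n = 0 := by rw [StepFn.qbar]; ring
      rw [StepFn.PhiAux]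
      calc -((1 - γ.qbar)⁻¹ * (κ - x) ^ 2 +
            ((1 - γ.qbar)⁻¹ * (γ.qbar - γ.q γ.n) * Mconst + cconst))
          = -((1 - γ.qbar)⁻¹ * (κ - x) ^ 2 + cconst) := by rw [heq]; ring
        _ ≤ _ := hbase
  | succ j ih =>
    have hmeas : Measurable (γ.PhiAux κ (j+1) (γ.q (γ.n - (j+1)))) := by
      rw [StepFn.PhiAux]
      exact coleHopf_measurable _ _ ih.1
    refine ⟨hmeas, fun x => ?_⟩
    rw [StepFn.PhiAux]
    have hs : (0:ℝ) ≤ γ.q (γ.n - j) - γ.q (γ.n - (j+1)) := by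
      have := q_mono γ (γ.n - j) (by omega) (γ.n - (j+1)) (by omega)
      linarith
    have hB : (0:ℝ) ≤ (1 - γ.qbar)⁻¹ * (γ.qbar - γ.q (γ.n - j)) * Mconst + cconst := by
      have h1 : γ.q (γ.n - j) ≤ γ.qbar := q_mono γ γ.n (by omega) (γ.n - j) (by omega)
      have h2 : (0:ℝ) ≤ (1 - γ.qbar)⁻¹ * (γ.qbar - γ.q (γ.n - j)) * Mconst :=
        mul_nonneg (mul_nonneg ha (by linarith)) Mconst_pos.le
      linarith [cconst_pos]
    have hm : (0:ℝ) ≤ γ.m (γ.n - (j+1)) := m_nonneg γ _ (by omega)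
    have hch := coleHopf_lower κ ((1 - γ.qbar)⁻¹)
      ((1 - γ.qbar)⁻¹ * (γ.qbar - γ.q (γ.n - j)) * Mconst + cconst)
      (γ.m (γ.n - (j+1))) (γ.q (γ.n - j) - γ.q (γ.n - (j+1))) ha hB hs hm
      ih.1 (fun y => phiAux_nonpos γ κ j _ y) ih.2 x
    calc -((1 - γ.qbar)⁻¹ * (κ - x) ^ 2 +
          ((1 - γ.qbar)⁻¹ * (γ.qbar - γ.q (γ.n - (j+1))) * Mconst + cconst))
        = -((1 - γ.qbar)⁻¹ * (κ - x) ^ 2 +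
          ((1 - γ.qbar)⁻¹ * (γ.q (γ.n - j) - γ.q (γ.n - (j+1))) * Mconst +
            ((1 - γ.qbar)⁻¹ * (γ.qbar - γ.q (γ.n - j)) * Mconst + cconst))) := by ring
      _ ≤ _ := hch

end Aux

open Aux

/-- part of Proposition 4.1, Eq. (4.7): for `γ ∈ SF⁺` with `q̄ = q̄(γ)`,
there is a constant `C > 0` depending only on `κ` and `q̄` such that
`−(3/2)(κ−x)²/(1−q̄) − C ≤ Φ_γ(t,x) ≤ 0` for all `(t,x) ∈ [0,q̄] × ℝ`,
uniformly over all `γ' ∈ SF⁺` with the same `q̄`. -/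
theorem statement_0 (κ : ℝ) (γ : StepFn) :
    ∃ C > (0 : ℝ), ∀ γ' : StepFn, γ'.qbar = γ.qbar →
      ∀ t ∈ Set.Icc (0 : ℝ) γ.qbar, ∀ x : ℝ,
        -(3 / 2) * (κ - x) ^ 2 / (1 - γ.qbar) - C ≤ γ'.Phi κ t x ∧ γ'.Phi κ t x ≤ 0 := by
  classical
  have hq1 : γ.qbar < 1 := qbar_lt_one γ
  have hq0 : 0 ≤ γ.qbar := qbar_nonneg γ
  set a : ℝ := (1 - γ.qbar)⁻¹ with ha_def
  have hapos : 0 < a := inv_pos.2 (by linarith)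
  refine ⟨a * Mconst + cconst + 1, ?_, ?_⟩
  · nlinarith [Mconst_pos, cconst_pos, hapos]
  intro γ' hqeq t ht x
  have hupper : γ'.Phi κ t x ≤ 0 := phiAux_nonpos γ' κ _ t x
  refine ⟨?_, hupper⟩
  -- lower bound
  have key : -(a * (κ - x) ^ 2 + (a * Mconst + cconst)) ≤ γ'.Phi κ t x := by
    have hPhi : γ'.Phi κ t x
        = γ'.PhiAux κ (γ'.n - Nat.findGreatest (fun k => γ'.q k ≤ t) γ'.n) t x := rfl
    set i := Nat.findGreatest (fun k => γ'.q k ≤ t) γ'.n with hi_def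
    have hi_le : i ≤ γ'.n := Nat.findGreatest_le _
    rw [hPhi]
    cases hcase : γ'.n - i with
    | zero =>
      rw [StepFn.PhiAux]
      have hbase := base_lower κ γ.qbar t x hq1 ht.2
      have hM : 0 ≤ a * Mconst := mul_nonneg hapos.le Mconst_pos.le
      calc -(a * (κ - x) ^ 2 + (a * Mconst + cconst))
          ≤ -(a * (κ - x) ^ 2 + cconst) := by linarith
        _ ≤ _ := hbase
    | succ j =>
      rw [StepFn.PhiAux]
      have hilt : i < γ'.n := by omega
      have hni : γ'.n - j = i + 1 := by omega
      have htlt : t < γ'.q (i + 1) := by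
        have hng := Nat.findGreatest_is_greatest (P := fun k => γ'.q k ≤ t)
          (n := γ'.n) (k := i + 1) (by omega) (by omega)
        exact lt_of_not_ge hng
      have hs : (0:ℝ) ≤ γ'.q (γ'.n - j) - t := by rw [hni]; linarith
      have hqle : γ'.q (γ'.n - j) ≤ γ.qbar := by
        rw [← hqeq]
        exact q_mono γ' γ'.n (by omega) (γ'.n - j) (by omega)
      have hbnd := phiAux_bounds γ' κ j
      rw [hqeq] at hbnd
      have hB : (0:ℝ) ≤ a * (γ.qbar - γ'.q (γ'.n - j)) * Mconst + cconst := by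
        have h2 : (0:ℝ) ≤ a * (γ.qbar - γ'.q (γ'.n - j)) * Mconst :=
          mul_nonneg (mul_nonneg hapos.le (by linarith)) Mconst_pos.le
        linarith [cconst_pos]
      have hm : (0:ℝ) ≤ γ'.m (γ'.n - (j + 1)) := m_nonneg γ' _ (by omega)
      have hch := coleHopf_lower κ a
        (a * (γ.qbar - γ'.q (γ'.n - j)) * Mconst + cconst)
        (γ'.m (γ'.n - (j + 1))) (γ'.q (γ'.n - j) - t) hapos.le hB hs hm
        hbnd.1 (fun y => phiAux_nonpos γ' κ j _ y) hbnd.2 x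
      have hconstle : a * (γ'.q (γ'.n - j) - t) * Mconst
          + (a * (γ.qbar - γ'.q (γ'.n - j)) * Mconst + cconst) ≤ a * Mconst + cconst := by
        have h1 : a * (γ.qbar - t) * Mconst ≤ a * 1 * Mconst := by
          apply mul_le_mul_of_nonneg_right _ Mconst_pos.le
          apply mul_le_mul_of_nonneg_left _ hapos.le
          linarith [ht.1]
        nlinarith
      calc -(a * (κ - x) ^ 2 + (a * Mconst + cconst))
          ≤ -(a * (κ - x) ^ 2 + (a * (γ'.q (γ'.n - j) - t) * Mconst
              + (a * (γ.qbar - γ'.q (γ'.n - j)) * Mconst + cconst))) := by linarith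
        _ ≤ _ := hch
  have hdiv : -(3 / 2) * (κ - x) ^ 2 / (1 - γ.qbar) = -((3/2) * (a * (κ - x) ^ 2)) := by
    rw [ha_def, div_eq_mul_inv]
    ring
  rw [hdiv]
  have hsq : 0 ≤ a * (κ - x) ^ 2 := mul_nonneg hapos.le (sq_nonneg _)
  linarith
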